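/- Suppose Eve's channel is a BEC and coset coding with parity check matrix A = [a_1 ... a_n] ∈ F_2^{m×n} (of full row rank) is used. For any received word z^n, the conditional information leakage satisfies L(z^n) = H(S^m) - H(S^m | Z^n = z^n) = m - rank([a_j : z_j = e]), where [a_j : z_j = e] is the submatrix of A formed by the columns at erased positions. -/

import Mathlib

open Finset

/-- Shannon entropy in bits of a pmf on a finite type. -/
noncomputable def ent {α : Type*} [Fintype α] (p : α → ℝ) : ℝ :=
  -∑ a, p a * Real.logb 2 (p a)

lemma ent_uniform {α : Type*} [Fintype α] [DecidableEq α] (S : Finset α) (hS : S.Nonempty)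
    (p : α → ℝ) (hp : ∀ a, p a = if a ∈ S then ((S.card : ℝ))⁻¹ else 0) :
    ent p = Real.logb 2 (S.card : ℝ) := by
  classical
  have hc : (0:ℝ) < (S.card : ℝ) := by exact_mod_cast Finset.card_pos.mpr hS
  have h1 : ∀ a, p a * Real.logb 2 (p a)
      = if a ∈ S then ((S.card:ℝ)⁻¹ * Real.logb 2 ((S.card:ℝ)⁻¹)) else 0 := by
    intro a; rw [hp a]; split <;> simp
  unfold ent
  rw [Finset.sum_congr rfl fun a _ => h1 a, Finset.sum_ite_mem, Finset.univ_inter,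
    Finset.sum_const, nsmul_eq_mul, Real.logb_inv]
  field_simp

lemma card_fiber {R M N : Type*} [CommRing R] [AddCommGroup M] [Module R M]
    [AddCommGroup N] [Module R N] [Fintype M]
    (f : M →ₗ[R] N) (U : Submodule R M) (u : N)
    [DecidableEq N] [DecidablePred (· ∈ U)] [DecidableEq M] [DecidablePred (· ∈ U.map f)] :
    (univ.filter fun x => f x = u ∧ x ∈ U).card
      = if u ∈ U.map f then Fintype.card {x : M // f x = 0 ∧ x ∈ U} else 0 := by
  classical
  split_ifs with h
  · obtain ⟨x₀, hx₀U, hx₀⟩ := Submodule.mem_map.mp h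
    rw [Fintype.card_subtype]
    apply Finset.card_nbij' (fun x => x - x₀) (fun y => y + x₀)
    · intro a ha
      simp only [mem_coe, mem_filter, mem_univ, true_and] at ha ⊢
      exact ⟨by rw [map_sub, ha.1, hx₀, sub_self], U.sub_mem ha.2 hx₀U⟩
    · intro a ha
      simp only [mem_coe, mem_filter, mem_univ, true_and] at ha ⊢
      exact ⟨by rw [map_add, ha.1, hx₀, zero_add], U.add_mem ha.2 hx₀U⟩
    · intro a _; simp
    · intro a _; simp
  · rw [Finset.card_eq_zero, Finset.filter_eq_empty_iff]
    rintro x _ ⟨hfx, hxU⟩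
    exact h (Submodule.mem_map.mpr ⟨x, hxU, hfx⟩)

/-- The parity check matrix `A = [I_m | A_2]`. -/
def pcheck {m k : ℕ} (A2 : Matrix (Fin m) (Fin k) (ZMod 2)) :
    Matrix (Fin m) (Fin m ⊕ Fin k) (ZMod 2) :=
  Matrix.of fun j => Sum.elim (fun j' => if j = j' then 1 else 0) (fun i => A2 j i)

/-- BEC(ε) transition probabilities: `none` is the erasure symbol. -/
def becW (ε : ℝ) : Option (ZMod 2) → ZMod 2 → ℝ
  | none, _ => ε
  | some b, x => if b = x then 1 - ε else 0

/-- Joint pmf of `S^m` and Eve's BEC observation `Z^n` under coset coding. -/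
noncomputable def pSZbec {m k : ℕ} (ε : ℝ) (A2 : Matrix (Fin m) (Fin k) (ZMod 2))
    (s : Fin m → ZMod 2) (z : (Fin m ⊕ Fin k) → Option (ZMod 2)) : ℝ :=
  ∑ x : (Fin m ⊕ Fin k) → ZMod 2,
    (1 / 2 ^ (m + k) : ℝ) * (if (pcheck A2).mulVec x = s then 1 else 0) *
      ∏ i, becW ε (z i) (x i)

/-- Conditional pmf of `S^m` given `Z^n = z^n`. -/
noncomputable def pcond {m k : ℕ} (ε : ℝ) (A2 : Matrix (Fin m) (Fin k) (ZMod 2))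
    (z : (Fin m ⊕ Fin k) → Option (ZMod 2)) (s : Fin m → ZMod 2) : ℝ :=
  pSZbec ε A2 s z / ∑ s', pSZbec ε A2 s' z

set_option maxHeartbeats 1000000 in
/-- Theorem 3: when Eve's channel is a BEC and coset coding with
`A = [I_m | A_2] = [a_1 … a_n]` is used, the conditional information leakage is
`L(z^n) = H(S^m) - H(S^m | Z^n = z^n) = m - rank [a_j : z_j = e]`. -/
theorem stmt11 {m k : ℕ} (ε : ℝ) (hε0 : 0 < ε) (hε1 : ε < 1)
    (A2 : Matrix (Fin m) (Fin k) (ZMod 2))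
    (z : (Fin m ⊕ Fin k) → Option (ZMod 2)) :
    ent (fun s => ∑ z', pSZbec ε A2 s z') - ent (pcond ε A2 z)
      = (m : ℝ) - (Module.finrank (ZMod 2)
          (Submodule.span (ZMod 2)
            ((fun i => fun j => pcheck A2 j i) '' {i | z i = none})) : ℝ) := by
  classical
  set L := (pcheck A2).mulVecLin with hL
  set V := Submodule.span (ZMod 2)
      ((fun i => fun j => pcheck A2 j i) '' {i | z i = none}) with hV
  set x₀ : (Fin m ⊕ Fin k) → ZMod 2 := fun i => (z i).getD 0 with hx₀
  set U : Submodule (ZMod 2) ((Fin m ⊕ Fin k) → ZMod 2) :=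
    Submodule.pi Set.univ
      (fun i => if z i = none then (⊤ : Submodule (ZMod 2) (ZMod 2)) else ⊥) with hUdef
  have hU : ∀ y : (Fin m ⊕ Fin k) → ZMod 2, y ∈ U ↔ ∀ i, z i ≠ none → y i = 0 := by
    intro y
    rw [hUdef, Submodule.mem_pi]
    constructor
    · intro h i hz
      have := h i (Set.mem_univ i)
      rw [if_neg hz] at this
      exact (Submodule.mem_bot _).mp this
    · intro h i _
      by_cases hz : z i = none
      · rw [if_pos hz]; trivial
      · rw [if_neg hz, h i hz]; exact Submodule.zero_mem _
  have hw : (0:ℝ) < ∏ i, (if z i = none then ε else 1 - ε) := by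
    apply Finset.prod_pos
    intro i _
    split <;> linarith
  have hP1 : ∀ x : (Fin m ⊕ Fin k) → ZMod 2,
      (∏ i, becW ε (z i) (x i)) = (∏ i, if z i = none then ε else 1 - ε) *
        (if (∀ i, z i ≠ none → x i = x₀ i) then 1 else 0) := by
    intro x
    by_cases h : ∀ i, z i ≠ none → x i = x₀ i
    · rw [if_pos h, mul_one]
      apply Finset.prod_congr rfl
      intro i _
      rcases hz : z i with _ | b
      · simp [becW, hz]
      · have hx : x i = b := by
          have h2 := h i (by simp [hz])
          rw [hx₀] at h2
          simpa [hz] using h2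
        simp [becW, hz, hx]
    · rw [if_neg h, mul_zero]
      push_neg at h
      obtain ⟨i, hzi, hxi⟩ := h
      apply Finset.prod_eq_zero (Finset.mem_univ i)
      rcases hz : z i with _ | b
      · exact absurd hz hzi
      · have hb : b ≠ x i := by
          intro hb
          apply hxi
          rw [hx₀]
          simp [hz, ← hb]
        simp [becW, hz, hb]
  have hind : ∀ (p q : Prop) (hp : Decidable p) (hq : Decidable q),
      ((if p then (1:ℝ) else 0) * (if q then 1 else 0)) = if p ∧ q then 1 else 0 := by
    intros p q hp hq
    by_cases h1 : p <;> by_cases h2 : q <;> simp [h1, h2]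
  have hP2 : ∀ s, pSZbec ε A2 s z = ((1 / 2 ^ (m + k) : ℝ) *
      (∏ i, if z i = none then ε else 1 - ε)) *
      ((univ.filter fun x => (pcheck A2).mulVec x = s ∧
        ∀ i, z i ≠ none → x i = x₀ i).card : ℝ) := by
    intro s
    unfold pSZbec
    rw [← Finset.sum_boole, Finset.mul_sum]
    apply Finset.sum_congr rfl
    intro x _
    rw [hP1 x, ← hind]
    ring
  -- shift bijection
  have hshift : ∀ s : Fin m → ZMod 2,
      (univ.filter fun x => (pcheck A2).mulVec x = s ∧
        ∀ i, z i ≠ none → x i = x₀ i).card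
      = (univ.filter fun y => L y = s - L x₀ ∧ y ∈ U).card := by
    intro s
    apply Finset.card_nbij' (fun x => x - x₀) (fun y => y + x₀)
    · intro a ha
      simp only [mem_coe, mem_filter, mem_univ, true_and] at ha ⊢
      constructor
      · rw [map_sub, hL, Matrix.mulVecLin_apply, ha.1]
      · rw [hU]
        intro i hzi
        simp [ha.2 i hzi]
    · intro a ha
      simp only [mem_coe, mem_filter, mem_univ, true_and] at ha ⊢
      constructor
      · have h1 : L (a + x₀) = s := by rw [map_add, ha.1]; abel
        rw [hL, Matrix.mulVecLin_apply] at h1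
        exact h1
      · intro i hzi
        have := (hU a).mp ha.2 i hzi
        simp [this]
    · intro a _; simp
    · intro a _; simp
  -- the span equals the image of U
  have hsingle : ∀ i, L (Pi.single i 1) = fun j => pcheck A2 j i := by
    intro i
    rw [hL, Matrix.mulVecLin_apply, Matrix.mulVec_single]
    funext j
    simp
  have hmap : U.map L = V := by
    apply le_antisymm
    · rintro _ ⟨y, hyU, rfl⟩
      have hy := (hU y).mp hyU
      have hrep : L y = ∑ i, y i • L (Pi.single i 1) := by
        conv_lhs => rw [show y = ∑ i, y i • Pi.single i (1 : ZMod 2) by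
          funext j
          simp [Finset.sum_apply, Pi.single_apply]]
        rw [map_sum]
        simp
      rw [hrep]
      apply Submodule.sum_mem
      intro i _
      by_cases hz : z i = none
      · apply Submodule.smul_mem
        rw [hsingle i, hV]
        exact Submodule.subset_span ⟨i, hz, rfl⟩
      · simp [hy i hz]
    · rw [hV, Submodule.span_le]
      rintro _ ⟨i, hi, rfl⟩
      refine ⟨Pi.single i 1, ?_, hsingle i⟩
      refine (hU _).mpr fun i' hz' => Pi.single_eq_of_ne (fun h : i' = i => ?_) 1
      rw [h] at hz'
      exact hz' hi
  set K : ℕ := Fintype.card {x : (Fin m ⊕ Fin k) → ZMod 2 // L x = 0 ∧ x ∈ U} with hKdef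
  have hKpos : 0 < K := by
    rw [hKdef]
    exact Fintype.card_pos_iff.mpr ⟨⟨0, by simp, U.zero_mem⟩⟩
  set C : ℝ := (1 / 2 ^ (m + k) : ℝ) * (∏ i, if z i = none then ε else 1 - ε) with hC
  have hCpos : (0:ℝ) < C := by
    rw [hC]
    apply mul_pos _ hw
    positivity
  -- closed form of pSZbec
  have hform : ∀ s, pSZbec ε A2 s z
      = C * (if s - L x₀ ∈ V then (K : ℝ) else 0) := by
    intro s
    rw [hP2 s, hshift s, card_fiber L U (s - L x₀), hmap, Nat.cast_ite, Nat.cast_zero]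
  -- cardinality of the support
  have hScard : (univ.filter fun s : Fin m → ZMod 2 => s - L x₀ ∈ V).card
      = 2 ^ (Module.finrank (ZMod 2) V) := by
    have h1 : (univ.filter fun s : Fin m → ZMod 2 => s - L x₀ ∈ V).card
        = (univ.filter fun v : Fin m → ZMod 2 => v ∈ V).card := by
      apply Finset.card_nbij' (fun s => s - L x₀) (fun v => v + L x₀)
      · intro a ha; simp only [mem_coe, mem_filter, mem_univ, true_and] at ha ⊢; exact ha
      · intro a ha; simp only [mem_coe, mem_filter, mem_univ, true_and] at ha ⊢; simpa using ha
      · intro a _; simp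
      · intro a _; simp
    have h2 : (univ.filter fun v : Fin m → ZMod 2 => v ∈ V).card = Fintype.card V := by
      rw [Fintype.card_subtype]
    have h3 : Fintype.card V = 2 ^ (Module.finrank (ZMod 2) V) := by
      rw [Module.card_eq_pow_finrank (K := ZMod 2) (V := V), ZMod.card 2]
    rw [h1, h2, h3]
  have hsum2 : (∑ s', pSZbec ε A2 s' z)
      = C * (K : ℝ) * (2:ℝ) ^ (Module.finrank (ZMod 2) V) := by
    rw [Finset.sum_congr rfl fun s _ => hform s, ← Finset.mul_sum]
    have h4 : (∑ s' : Fin m → ZMod 2, if s' - L x₀ ∈ V then (K : ℝ) else 0)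
        = (K:ℝ) * ((univ.filter fun s : Fin m → ZMod 2 => s - L x₀ ∈ V).card : ℝ) := by
      rw [show (fun s' : Fin m → ZMod 2 => if s' - L x₀ ∈ V then (K : ℝ) else 0)
          = fun s' => (K:ℝ) * (if s' - L x₀ ∈ V then (1:ℝ) else 0) from
        funext fun s' => by split <;> simp]
      rw [← Finset.mul_sum, Finset.sum_boole]
    rw [h4, hScard]
    push_cast
    ring
  set r : ℕ := Module.finrank (ZMod 2) V with hr
  have hpcond : ∀ s, pcond ε A2 z s
      = if s - L x₀ ∈ V then (((2:ℝ) ^ r)⁻¹) else 0 := by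
    intro s
    unfold pcond
    rw [hform s, hsum2]
    have h2r : (0:ℝ) < (2:ℝ) ^ r := by positivity
    have hKr : (0:ℝ) < (K:ℝ) := by exact_mod_cast hKpos
    split_ifs with h
    · rw [mul_comm C (K:ℝ)]
      field_simp
    · simp
  have hmemS : L x₀ ∈ (univ.filter fun s : Fin m → ZMod 2 => s - L x₀ ∈ V) :=
    Finset.mem_filter.mpr ⟨Finset.mem_univ _, by rw [sub_self]; exact V.zero_mem⟩
  have hScard' : (((univ.filter fun s : Fin m → ZMod 2 => s - L x₀ ∈ V).card : ℕ) : ℝ)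
      = (2:ℝ) ^ r := by rw [hScard]; push_cast; rfl
  have hp : ∀ a, pcond ε A2 z a
      = if a ∈ (univ.filter fun s : Fin m → ZMod 2 => s - L x₀ ∈ V) then
          (((univ.filter fun s : Fin m → ZMod 2 => s - L x₀ ∈ V).card : ℝ))⁻¹ else 0 := by
    intro a
    rw [hpcond a]
    by_cases h : a - L x₀ ∈ V
    · rw [if_pos h, if_pos (show a ∈ univ.filter (fun s : Fin m → ZMod 2 => s - L x₀ ∈ V)
          from Finset.mem_filter.mpr ⟨Finset.mem_univ _, h⟩), hScard']
    · rw [if_neg h, if_neg (show ¬ (a ∈ univ.filter (fun s : Fin m → ZMod 2 => s - L x₀ ∈ V))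
          from fun hc => h (Finset.mem_filter.mp hc).2)]
  have hent2 : ent (pcond ε A2 z) = (r : ℝ) := by
    rw [ent_uniform _ ⟨L x₀, hmemS⟩ _ hp, hScard']
    rw [show ((2:ℝ) ^ r) = ((2:ℝ) ^ (r:ℕ)) from rfl, Real.logb_pow, Real.logb_self_eq_one]
      <;> norm_num
  classical
  have hbecsum : ∀ c : ZMod 2, ∑ b : Option (ZMod 2), becW ε b c = 1 := by
    intro c
    rw [Fintype.sum_option]
    simp [becW, Finset.sum_ite_eq]
  have hz'sum : ∀ x : (Fin m ⊕ Fin k) → ZMod 2,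
      (∑ z' : (Fin m ⊕ Fin k) → Option (ZMod 2), ∏ i, becW ε (z' i) (x i)) = 1 := by
    intro x
    rw [← Fintype.prod_sum (f := fun i (b : Option (ZMod 2)) => becW ε b (x i))]
    simp [hbecsum]
  have hmarg : ∀ s, (∑ z', pSZbec ε A2 s z') = (1 / 2 ^ (m + k) : ℝ) *
      ((univ.filter fun x => (pcheck A2).mulVec x = s).card : ℝ) := by
    intro s
    unfold pSZbec
    rw [Finset.sum_comm]
    have h1 : ∀ x : (Fin m ⊕ Fin k) → ZMod 2,
        (∑ z' : (Fin m ⊕ Fin k) → Option (ZMod 2),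
          (1 / 2 ^ (m + k) : ℝ) * (if (pcheck A2).mulVec x = s then 1 else 0) *
            ∏ i, becW ε (z' i) (x i))
        = (1 / 2 ^ (m + k) : ℝ) * (if (pcheck A2).mulVec x = s then 1 else 0) := by
      intro x; rw [← Finset.mul_sum, hz'sum, mul_one]
    rw [Finset.sum_congr rfl fun x _ => h1 x, ← Finset.mul_sum, Finset.sum_boole]
  have hLsurj : ∀ s : Fin m → ZMod 2, (pcheck A2).mulVecLin (Sum.elim s 0) = s := by
    intro s; funext j
    simp [Matrix.mulVecLin_apply, Matrix.mulVec, dotProduct, pcheck,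
      Fintype.sum_sum_type, ite_mul, Finset.sum_ite_eq]
  -- fiber cardinality constant
  have hfib : ∀ s : Fin m → ZMod 2,
      ((univ.filter fun x => (pcheck A2).mulVec x = s).card : ℕ)
        = Fintype.card {x : (Fin m ⊕ Fin k) → ZMod 2 //
            L x = 0 ∧ x ∈ (⊤ : Submodule (ZMod 2) _)} := by
    intro s
    have hpred : (univ.filter fun x : (Fin m ⊕ Fin k) → ZMod 2 => (pcheck A2).mulVec x = s)
        = univ.filter fun x => L x = s ∧ x ∈ (⊤ : Submodule (ZMod 2) _) :=
      Finset.filter_congr (by intro x _; simp [hL])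
    rw [hpred, card_fiber L ⊤ s, if_pos]
    exact Submodule.mem_map.mpr ⟨Sum.elim s 0, Submodule.mem_top, hLsurj s⟩
  have htot : ∑ s : Fin m → ZMod 2,
      ((univ.filter fun x => (pcheck A2).mulVec x = s).card : ℕ) = 2 ^ (m + k) := by
    rw [← Finset.card_eq_sum_card_fiberwise (fun x _ => Finset.mem_univ ((pcheck A2).mulVec x))]
    simp [Fintype.card_fun]
  set K0 : ℕ := Fintype.card {x : (Fin m ⊕ Fin k) → ZMod 2 //
      L x = 0 ∧ x ∈ (⊤ : Submodule (ZMod 2) _)} with hK0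
  have hNne : (2:ℝ) ^ (m + k) ≠ 0 := by positivity
  have hmne : (2:ℝ) ^ m ≠ 0 := by positivity
  have hsum1 : ∑ s : Fin m → ZMod 2, (1 / 2 ^ (m + k) : ℝ) *
      ((univ.filter fun x => (pcheck A2).mulVec x = s).card : ℝ) = 1 := by
    rw [← Finset.mul_sum]
    rw [show (∑ s : Fin m → ZMod 2,
        ((univ.filter fun x => (pcheck A2).mulVec x = s).card : ℝ))
      = ((∑ s : Fin m → ZMod 2,
        (univ.filter fun x => (pcheck A2).mulVec x = s).card : ℕ) : ℝ) by push_cast; rfl]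
    rw [htot]
    push_cast
    field_simp
  have hconstsum : ∑ s : Fin m → ZMod 2, (1 / 2 ^ (m + k) : ℝ) * (K0 : ℝ)
      = (2:ℝ)^m * ((1 / 2 ^ (m + k) : ℝ) * (K0 : ℝ)) := by
    rw [Finset.sum_const, Finset.card_univ, nsmul_eq_mul]
    norm_num [Fintype.card_fun]
  have hc0 : (1 / 2 ^ (m + k) : ℝ) * (K0 : ℝ) = ((2:ℝ)^m)⁻¹ := by
    have h1 : (2:ℝ)^m * ((1 / 2 ^ (m + k) : ℝ) * (K0 : ℝ)) = 1 := by
      rw [← hconstsum, Finset.sum_congr rfl fun s _ => by rw [← hfib s], hsum1]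
    field_simp at h1 ⊢
    linarith
  have hmargc : ∀ s : Fin m → ZMod 2, (∑ z', pSZbec ε A2 s z') = ((2:ℝ)^m)⁻¹ := by
    intro s
    rw [hmarg s, hfib s]; exact hc0
  have hent1 : ent (fun s : Fin m → ZMod 2 => ∑ z', pSZbec ε A2 s z') = (m : ℝ) := by
    rw [ent_uniform (univ : Finset (Fin m → ZMod 2)) Finset.univ_nonempty _
      (by intro a; rw [hmargc a]; simp [Finset.card_univ, Fintype.card_fun])]
    rw [Finset.card_univ]
    simp [Fintype.card_fun]
    rw [Real.logb_pow, Real.logb_self_eq_one] <;> norm_num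
  rw [hent1, hent2]
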